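/- Let G be a locally compact Abelian group and suppose μ ∈ M(G) satisfies φ(μ) = 0 for every character φ of M(G) not in the closure of Ĝ inside Δ(M(G)). Then φ(μ) = 0 for every φ ∈ Δ(M(G)) \ Ĝ, i.e., μ ∈ M₀₀(G). -/
import Mathlib


open WeakDual

/-- Let `G` be a locally compact Abelian group and suppose `μ ∈ M(G)`
satisfies `φ(μ) = 0` for every character `φ` of `M(G)` not in the closure of `Ĝ` inside
`Δ(M(G))`. Then `φ(μ) = 0` for every `φ ∈ Δ(M(G)) \ Ĝ`, i.e. `μ ∈ M₀₀(G)`.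

`M(G)` is modelled as a commutative complex Banach algebra `A`, with `Ĝ` given as a subset
`Ghat` of the Gelfand space `Δ(M(G)) = characterSpace ℂ A`. As in the paper, we use as
hypotheses: (a) `cl(Ĝ)` is contained in the Šilov boundary `∂(M(G))` (the set `Sb`), and
(b) the theorem of Graham et al.: the interior of `∂(M(G))` in `Δ(M(G))` equals `Ĝ`. -/
theorem mem_M00_of_vanishing_off_closure
    {A : Type*} [NormedCommRing A] [NormedAlgebra ℂ A] [CompleteSpace A]
    (Ghat Sb : Set (characterSpace ℂ A))
    (hGS : closure Ghat ⊆ Sb)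
    (hint : interior Sb = Ghat)
    (μ : A)
    (h : ∀ φ : characterSpace ℂ A, φ ∉ closure Ghat → φ μ = 0) :
    ∀ φ : characterSpace ℂ A, φ ∉ Ghat → φ μ = 0 := by
  intro φ hφ
  -- The zero set of `μ̂` is closed and contains the complement of `cl(Ĝ)`.
  have hX : IsClosed {ψ : characterSpace ℂ A | ψ μ = 0} := by
    have hc : Continuous fun ψ : characterSpace ℂ A => ψ μ :=
      (WeakDual.eval_continuous μ).comp continuous_subtype_val
    exact isClosed_eq hc continuous_const
  have hsub : (closure Ghat)ᶜ ⊆ {ψ : characterSpace ℂ A | ψ μ = 0} := fun ψ hψ => h ψ hψ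
  have hclsub : closure ((closure Ghat)ᶜ) ⊆ {ψ : characterSpace ℂ A | ψ μ = 0} :=
    hX.closure_subset_iff.mpr hsub
  apply hclsub
  rw [closure_compl]
  intro hmem
  exact hφ (hint ▸ interior_mono hGS hmem)
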